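/- Let (X,d) be a metric space admitting a non-trivial non-atomic Borel measure, and let f_n (n ∈ ℕ⁺) and f be uniformly continuous self-maps of X with f_n pointwise weak orbitally converging to f. Then f is positively pointwise measure expansive at x ∈ X if and only if there exists δ > 0 such that ν({y ∈ X : ⋃_{m≥1} ⋂_{n≥m} E⁺_x(f_n, y, δ) = ∅}) = 0 for every non-atomic Borel measure ν on X. -/

import Mathlib

open MeasureTheory

/-- Pointwise weak orbital convergence on a space admitting a non-trivial
non-atomic Borel measure. `f` is positively pointwise measure expansive at `x` iff there
is `δ > 0` such that `ν({y : ⋃_{m≥1} ⋂_{n≥m} E⁺_x(f_n, y, δ) = ∅}) = 0` for every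
non-atomic Borel measure `ν`. -/
theorem positively_pointwise_measure_expansive_iff_of_pwoc
    {X : Type*} [MetricSpace X] [MeasurableSpace X] [BorelSpace X]
    (hX : ∃ μ : Measure X, (∀ z : X, μ {z} = 0) ∧ 0 < μ Set.univ)
    (F : ℕ → X → X) (f : X → X)
    (hF : ∀ n, UniformContinuous (F n)) (hf : UniformContinuous f)
    (hpwoc : ∀ x : X, ∀ k : ℕ, 1 ≤ k → ∀ ε : ℝ, 0 < ε →
      ∃ N : ℕ, 1 ≤ N ∧ ∀ n, N ≤ n → dist ((F n)^[k] x) (f^[k] x) < ε)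
    (x : X) :
    (∃ δ : ℝ, 0 < δ ∧ ∀ ν : Measure X, (∀ z : X, ν {z} = 0) →
        ν {y : X | ∀ k : ℕ, dist (f^[k] x) (f^[k] y) ≤ δ} = 0) ↔
    (∃ δ : ℝ, 0 < δ ∧ ∀ ν : Measure X, (∀ z : X, ν {z} = 0) →
        ν {y : X | ¬ ∃ m : ℕ, 1 ≤ m ∧ ∃ k : ℕ,
            ∀ n, m ≤ n → δ < dist ((F n)^[k] x) ((F n)^[k] y)} = 0) := by
  constructor
  · rintro ⟨δ, hδ, h⟩
    refine ⟨δ, hδ, fun ν hν => ?_⟩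
    refine le_antisymm (le_trans (measure_mono ?_) (h ν hν).le) zero_le
    intro y hy
    simp only [Set.mem_setOf_eq] at hy ⊢
    push_neg at hy
    intro k
    by_contra hgt
    push_neg at hgt
    rcases Nat.eq_zero_or_pos k with rfl | hk
    · obtain ⟨n, _, hn⟩ := hy 1 le_rfl 0
      simp only [Function.iterate_zero, id_eq] at hn hgt
      linarith
    · have hε : (0:ℝ) < (dist (f^[k] x) (f^[k] y) - δ)/3 := by linarith
      obtain ⟨N1, _, hN1⟩ := hpwoc x k hk _ hε
      obtain ⟨N2, _, hN2⟩ := hpwoc y k hk _ hε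
      obtain ⟨n, hn, hnd⟩ := hy (max 1 (max N1 N2)) (le_max_left _ _) k
      have h1 := hN1 n (le_trans (le_trans (le_max_left N1 N2) (le_max_right 1 _)) hn)
      have h2 := hN2 n (le_trans (le_trans (le_max_right N1 N2) (le_max_right 1 _)) hn)
      have htri := dist_triangle4 (f^[k] x) ((F n)^[k] x) ((F n)^[k] y) (f^[k] y)
      rw [dist_comm] at h1
      linarith
  · rintro ⟨δ, hδ, h⟩
    refine ⟨δ/2, by linarith, fun ν hν => ?_⟩
    refine le_antisymm (le_trans (measure_mono ?_) (h ν hν).le) zero_le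
    intro y hy
    simp only [Set.mem_setOf_eq] at hy ⊢
    push_neg
    intro m hm k
    rcases Nat.eq_zero_or_pos k with rfl | hk
    · refine ⟨m, le_rfl, ?_⟩
      have := hy 0
      simp only [Function.iterate_zero, id_eq] at this ⊢
      linarith
    · obtain ⟨N1, _, hN1⟩ := hpwoc x k hk (δ/4) (by linarith)
      obtain ⟨N2, _, hN2⟩ := hpwoc y k hk (δ/4) (by linarith)
      refine ⟨max m (max N1 N2), le_max_left _ _, ?_⟩
      have h1 := hN1 _ (le_trans (le_max_left N1 N2) (le_max_right m _))
      have h2 := hN2 _ (le_trans (le_max_right N1 N2) (le_max_right m _))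
      have htri := dist_triangle4 ((F (max m (max N1 N2)))^[k] x) (f^[k] x) (f^[k] y)
        ((F (max m (max N1 N2)))^[k] y)
      have hk' := hy k
      rw [dist_comm ((F (max m (max N1 N2)))^[k] y)] at h2
      linarith
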